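/- arXiv:1610.03611 — 4 statements merged into one kernel-verified Lean document; each statement's English description precedes it below -/
import Mathlib

section
/- Let K ≥ 1, let q₁,…,q_K ∈ [0,M₁] and μ₁,…,μ_K > 0 with Σ_{j=1}^K μ_j = 1, let θ ∈ (0,1), p ∈ (0,1), λ > 0, and define H_S(x) = (1−θ)Σ_{j=1}^K μ_j x^{q_j} and H_V(x) = Σ_{j=1}^K μ_j q_j − (1−θ)Σ_{j=1}^K μ_j q_j x^{q_j} + (log x)/(pλ) for x > 0. Suppose ψ : [0,T] → (0,∞) is differentiable with ψ(0) = 1 and ψ'(t) = −pλ ψ(t) H_V(ψ(t)) for all t ∈ [0,T], and suppose (s(·,1),…,s(·,K), v) : [0,T] → ℝ^{K+1} is differentiable and satisfies s'(t,i) = −pλ v(t) q_i s(t,i) for 1 ≤ i ≤ K, v'(t) = −v(t) + pλ v(t) Σ_{i=1}^K q_i² s(t,i), with initial conditions s(0,i) = (1−θ)μ_i for 1 ≤ i ≤ K and v(0) = θ Σ_{i=1}^K q_i μ_i. Then for every t ∈ [0,T], v(t) = H_V(ψ(t)) and Σ_{i=1}^K s(t,i) = H_S(ψ(t)). -/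
/-- A `C¹` map is Lipschitz on any closed ball. -/
lemma aux_lipschitz_on_closedBall {E F : Type*} [NormedAddCommGroup E] [NormedSpace ℝ E] [ProperSpace E]
    [NormedAddCommGroup F] [NormedSpace ℝ F] {f : E → F} (hf : ContDiff ℝ 1 f) (R : ℝ) :
    ∃ L : NNReal, LipschitzOnWith L f (Metric.closedBall 0 R) := by
  obtain ⟨C, hC⟩ := (isCompact_closedBall (0 : E) R).exists_bound_of_continuousOn
    ((hf.continuous_fderiv one_ne_zero).continuousOn)
  refine ⟨C.toNNReal, (convex_closedBall _ _).lipschitzOnWith_of_nnnorm_hasFDerivWithin_le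
    (fun x _ => ((hf.differentiable one_ne_zero) x).hasFDerivAt.hasFDerivWithinAt)
    (fun x hx => ?_)⟩
  rw [← NNReal.coe_le_coe, coe_nnnorm, Real.coe_toNNReal']
  exact le_max_of_le_left (hC x hx)

/- The deterministic (ODE) content of the paper's main law of large numbers
(Theorem 2.1) in the finitely supported case: `P(ρ = q j) = μ j`,
`H_S(x) = (1-θ) Σ μ_j x^{q_j}`,
`H_V(x) = Σ μ_j q_j - (1-θ) Σ μ_j q_j x^{q_j} + log x / (pλ)`.
If ψ solves ODE (2.3) and (s, v) solves ODE (3.7), then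
`v t = H_V(ψ t)` and `Σ_i s t i = H_S(ψ t)`. -/
theorem sir_lln_ode_identity
    (K : ℕ) (hK : 1 ≤ K) (M₁ : ℝ)
    (q μ : Fin K → ℝ) (hq : ∀ j, q j ∈ Set.Icc (0 : ℝ) M₁)
    (hμ : ∀ j, 0 < μ j) (hμsum : ∑ j, μ j = 1)
    (θ p lam : ℝ) (hθ : θ ∈ Set.Ioo (0 : ℝ) 1) (hp : p ∈ Set.Ioo (0 : ℝ) 1)
    (hlam : 0 < lam)
    (T : ℝ) (hT : 0 ≤ T)
    (HS HV : ℝ → ℝ)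
    (hHS : ∀ x > (0 : ℝ), HS x = (1 - θ) * ∑ j, μ j * x ^ (q j))
    (hHV : ∀ x > (0 : ℝ), HV x =
      (∑ j, μ j * q j) - (1 - θ) * (∑ j, μ j * q j * x ^ (q j))
        + Real.log x / (p * lam))
    (ψ : ℝ → ℝ) (hψpos : ∀ t ∈ Set.Icc 0 T, 0 < ψ t) (hψ0 : ψ 0 = 1)
    (hψ' : ∀ t ∈ Set.Icc 0 T,
      HasDerivAt ψ (-(p * lam) * ψ t * HV (ψ t)) t)
    (s : ℝ → Fin K → ℝ) (v : ℝ → ℝ)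
    (hs' : ∀ t ∈ Set.Icc 0 T, ∀ i,
      HasDerivAt (fun u => s u i) (-(p * lam) * v t * q i * s t i) t)
    (hv' : ∀ t ∈ Set.Icc 0 T,
      HasDerivAt v (-v t + p * lam * v t * ∑ i, (q i) ^ 2 * s t i) t)
    (hs0 : ∀ i, s 0 i = (1 - θ) * μ i)
    (hv0 : v 0 = θ * ∑ i, q i * μ i) :
    ∀ t ∈ Set.Icc 0 T, v t = HV (ψ t) ∧ (∑ i, s t i) = HS (ψ t) := by
  obtain ⟨hp0, hp1⟩ := hp
  have hc : 0 < p * lam := mul_pos hp0 hlam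
  -- the candidate solution built from ψ
  set S : ℝ → Fin K → ℝ := fun t i => (1 - θ) * μ i * ψ t ^ q i with hSdef
  set W : ℝ → ℝ := fun t => (∑ j, μ j * q j) - (1 - θ) * (∑ j, μ j * q j * ψ t ^ q j)
      + Real.log (ψ t) / (p * lam) with hWdef
  have hWHV : ∀ t ∈ Set.Icc 0 T, W t = HV (ψ t) := fun t ht => (hHV _ (hψpos t ht)).symm
  -- the autonomous vector field
  set vf : (Fin K → ℝ) × ℝ → (Fin K → ℝ) × ℝ := fun x =>
    (fun i => -(p * lam) * x.2 * q i * x.1 i,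
      -x.2 + p * lam * x.2 * ∑ i, (q i) ^ 2 * x.1 i) with hvfdef
  set F : ℝ → (Fin K → ℝ) × ℝ := fun t => (s t, v t) with hFdef
  set G : ℝ → (Fin K → ℝ) × ℝ := fun t => (S t, W t) with hGdef
  -- (s, v) solves the system
  have hF' : ∀ t ∈ Set.Icc 0 T, HasDerivAt F (vf (F t)) t := fun t ht =>
    HasDerivAt.prodMk (hasDerivAt_pi.mpr fun i => hs' t ht i) (hv' t ht)
  -- ψ solves its ODE with HV rewritten as W
  have hψd : ∀ t ∈ Set.Icc 0 T, HasDerivAt ψ (-(p * lam) * ψ t * W t) t := fun t ht => by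
    rw [hWHV t ht]; exact hψ' t ht
  -- (S, W) solves the same system
  have hS' : ∀ t ∈ Set.Icc 0 T, ∀ i,
      HasDerivAt (fun u => S u i) (-(p * lam) * W t * q i * S t i) t := by
    intro t ht i
    have hψt := hψpos t ht
    have h1 : HasDerivAt (fun u => ψ u ^ q i)
        ((-(p * lam) * ψ t * W t) * q i * ψ t ^ (q i - 1)) t :=
      (hψd t ht).rpow_const (Or.inl hψt.ne')
    have h2 := h1.const_mul ((1 - θ) * μ i)
    convert h2 using 1
    · rfl
    · rfl
    simp only [hSdef]
    rw [Real.rpow_sub hψt, Real.rpow_one]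
    field_simp
  have hW' : ∀ t ∈ Set.Icc 0 T,
      HasDerivAt W (-W t + p * lam * W t * ∑ i, (q i) ^ 2 * S t i) t := by
    intro t ht
    have hψt := hψpos t ht
    have hψd' := hψd t ht
    have hsum : HasDerivAt (fun u => ∑ j, μ j * q j * ψ u ^ q j)
        (∑ j, μ j * q j * ((-(p * lam) * ψ t * W t) * q j * ψ t ^ (q j - 1))) t :=
      HasDerivAt.fun_sum fun j _ =>
        ((hψd'.rpow_const (Or.inl hψt.ne')).const_mul (μ j * q j))
    have hlog : HasDerivAt (fun u => Real.log (ψ u) / (p * lam))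
        ((-(p * lam) * ψ t * W t) / ψ t / (p * lam)) t :=
      (hψd'.log hψt.ne').div_const _
    have hd := ((hsum.const_mul (1 - θ)).const_sub (∑ j, μ j * q j)).add hlog
    convert hd using 1
    · rfl
    · rfl
    · rfl
    have key : ∀ j : Fin K,
        (1 - θ) * (μ j * q j * ((-(p * lam) * ψ t * W t) * q j * ψ t ^ (q j - 1)))
          = -(p * lam * W t * ((q j) ^ 2 * S t j)) := by
      intro j
      simp only [hSdef]
      rw [Real.rpow_sub hψt, Real.rpow_one]
      field_simp
    have h1 : (1 - θ) * ∑ j, μ j * q j * ((-(p * lam) * ψ t * W t) * q j * ψ t ^ (q j - 1))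
        = -(p * lam * W t * ∑ i, (q i) ^ 2 * S t i) := by
      rw [Finset.mul_sum]
      rw [Finset.sum_congr rfl fun j _ => key j]
      rw [Finset.sum_neg_distrib, Finset.mul_sum]
    rw [h1]
    have h2 : (-(p * lam) * ψ t * W t) / ψ t / (p * lam) = -W t := by
      field_simp
    rw [h2]
    ring
  have hG' : ∀ t ∈ Set.Icc 0 T, HasDerivAt G (vf (G t)) t := fun t ht =>
    HasDerivAt.prodMk (hasDerivAt_pi.mpr fun i => hS' t ht i) (hW' t ht)
  -- same initial conditions
  have h0 : F 0 = G 0 := by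
    have h0T : (0 : ℝ) ∈ Set.Icc 0 T := ⟨le_refl 0, hT⟩
    simp only [hFdef, hGdef, Prod.mk.injEq]
    constructor
    · funext i
      simp only [hSdef, hψ0, Real.one_rpow, mul_one, hs0 i]
    · simp only [hWdef, hψ0, Real.one_rpow, mul_one, Real.log_one, zero_div, add_zero, hv0]
      rw [show (∑ i, q i * μ i) = ∑ j, μ j * q j from
        Finset.sum_congr rfl fun i _ => mul_comm _ _]
      ring
  -- continuity
  have hFc : ContinuousOn F (Set.Icc 0 T) := fun t ht =>
    (hF' t ht).continuousAt.continuousWithinAt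
  have hGc : ContinuousOn G (Set.Icc 0 T) := fun t ht =>
    (hG' t ht).continuousAt.continuousWithinAt
  -- both trajectories stay in a closed ball
  obtain ⟨R, hR⟩ := (((isCompact_Icc.image_of_continuousOn hFc).union
    (isCompact_Icc.image_of_continuousOn hGc)).isBounded).subset_closedBall 0
  -- the vector field is C¹, hence Lipschitz on the ball
  have hvf : ContDiff ℝ 1 vf := by
    apply ContDiff.prodMk
    · rw [contDiff_pi]
      intro i
      exact ((contDiff_const.mul contDiff_snd).mul contDiff_const).mul
        ((contDiff_apply ℝ ℝ i).comp contDiff_fst)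
    · exact (contDiff_snd.neg).add
        ((contDiff_const.mul contDiff_snd).mul
          (ContDiff.sum fun i _ => contDiff_const.mul
            ((contDiff_apply ℝ ℝ i).comp contDiff_fst)))
  obtain ⟨L, hL⟩ := aux_lipschitz_on_closedBall hvf R
  -- uniqueness of ODE solutions
  have heq : Set.EqOn F G (Set.Icc 0 T) := by
    apply ODE_solution_unique_of_mem_Icc_right (v := fun _ => vf)
      (s := fun _ => Metric.closedBall 0 R) (K := L) (fun _ _ => hL) hFc
      (fun t ht => (hF' t (Set.Ico_subset_Icc_self ht)).hasDerivWithinAt)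
      (fun t ht => hR (Or.inl ⟨t, Set.Ico_subset_Icc_self ht, rfl⟩)) hGc
      (fun t ht => (hG' t (Set.Ico_subset_Icc_self ht)).hasDerivWithinAt)
      (fun t ht => hR (Or.inr ⟨t, Set.Ico_subset_Icc_self ht, rfl⟩)) h0
  -- conclude
  intro t ht
  have hFG := heq ht
  have hsv : s t = S t ∧ v t = W t := by
    constructor
    · exact congrArg Prod.fst hFG
    · exact congrArg Prod.snd hFG
  constructor
  · rw [hsv.2, hWHV t ht]
  · rw [hsv.1, hHS _ (hψpos t ht), Finset.mul_sum]
    exact Finset.sum_congr rfl fun i _ => by simp only [hSdef]; ring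
end

section
/- Fix p ∈ (0,1) and c, d > 0 with c + d ≤ 1. For each n ≥ 1, let {U_{ij} : 0 ≤ i < j ≤ n−1} be independent Bernoulli(p) random variables (set U_{ji} = U_{ij}). For disjoint subsets C, D of {0,…,n−1}, let α(C,D) = Σ_{i∈C, j∈D} U_{ij}, and define β(c,d,n) as the maximum of |α(C,D) − |C|·|D|·p| over all pairs of disjoint subsets C, D of {0,…,n−1} with |C| ≥ cn and |D| ≥ dn. Then β(c,d,n)/n² → 0 in probability as n → ∞, i.e., for every ε > 0, P(β(c,d,n) ≥ εn²) → 0 as n → ∞. -/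
open MeasureTheory ProbabilityTheory Filter

section ErdosRenyiAux

lemma bern_mgf {Ω : Type*} [MeasurableSpace Ω] (μ : Measure Ω) [IsProbabilityMeasure μ]
    (X : Ω → ℝ) (hX : Measurable X) (p : ℝ) (hp0 : 0 ≤ p) (hp1 : p ≤ 1)
    (h1 : μ {ω | X ω = 1} = ENNReal.ofReal p)
    (h0 : μ {ω | X ω = 0} = ENNReal.ofReal (1 - p)) (t : ℝ) :
    mgf X μ t = p * Real.exp t + (1 - p) ∧
      Integrable (fun ω => Real.exp (t * X ω)) μ := by
  have hA : MeasurableSet {ω | X ω = 1} := hX (measurableSet_singleton 1)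
  have hB : MeasurableSet {ω | X ω = 0} := hX (measurableSet_singleton 0)
  have hdisj : Disjoint {ω | X ω = 1} {ω | X ω = 0} := by
    rw [Set.disjoint_left]; intro ω hω1 hω0
    simp only [Set.mem_setOf_eq] at hω1 hω0
    rw [hω1] at hω0; norm_num at hω0
  have hunion : μ ({ω | X ω = 1} ∪ {ω | X ω = 0}) = 1 := by
    rw [measure_union hdisj hB, h1, h0, ← ENNReal.ofReal_add hp0 (by linarith)]
    norm_num
  have hae : ∀ᵐ ω ∂μ, ω ∈ ({ω | X ω = 1} ∪ {ω | X ω = 0}) := by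
    rw [ae_iff]
    have : {ω | ¬ ω ∈ ({ω | X ω = 1} ∪ {ω | X ω = 0})} =
        ({ω | X ω = 1} ∪ {ω | X ω = 0})ᶜ := rfl
    rw [this, measure_compl (hA.union hB) (measure_ne_top _ _), hunion]
    simp
  set g : Ω → ℝ := fun ω =>
    Real.exp t * ({ω | X ω = 1}.indicator (fun _ => (1:ℝ)) ω) +
      {ω | X ω = 0}.indicator (fun _ => (1:ℝ)) ω with hg
  have haeeq : (fun ω => Real.exp (t * X ω)) =ᵐ[μ] g := by
    filter_upwards [hae] with ω hω
    rcases hω with hω | hω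
    · simp only [Set.mem_setOf_eq] at hω
      simp [hg, Set.indicator_apply, hω]
    · simp only [Set.mem_setOf_eq] at hω
      simp [hg, Set.indicator_apply, hω]
  have hgint : Integrable g μ := by
    apply Integrable.add
    · exact ((integrable_const (1:ℝ)).indicator hA).const_mul _
    · exact (integrable_const (1:ℝ)).indicator hB
  have hint : Integrable (fun ω => Real.exp (t * X ω)) μ := hgint.congr haeeq.symm
  refine ⟨?_, hint⟩
  rw [mgf, integral_congr_ae haeeq, integral_add (((integrable_const (1:ℝ)).indicator hA).const_mul _)
    ((integrable_const (1:ℝ)).indicator hB), integral_const_mul,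
    integral_indicator_const _ hA, integral_indicator_const _ hB, measureReal_def, measureReal_def, h1, h0,
    ENNReal.toReal_ofReal hp0, ENNReal.toReal_ofReal (by linarith)]
  simp only [smul_eq_mul, mul_one]; ring

lemma bern_mgf_bound {p t : ℝ} (hp0 : 0 ≤ p) (hp1 : p ≤ 1) (ht : |t| ≤ 1) :
    p * Real.exp t + (1 - p) ≤ Real.exp (p * t + 2 * t ^ 2) := by
  have hexp : Real.exp t ≤ 1 + t + 2 * t ^ 2 := by
    have h := Real.exp_bound ht (by norm_num : 0 < 3)
    have h2 : ∑ i ∈ Finset.range 3, t ^ i / (Nat.factorial i : ℝ) = 1 + t + t ^ 2 / 2 := by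
      simp [Finset.sum_range_succ, Nat.factorial]
    rw [h2] at h
    have h3 : Real.exp t - (1 + t + t ^ 2 / 2) ≤ |t| ^ 3 * ((Nat.succ 3 : ℝ) / ((Nat.factorial 3 : ℝ) * 3)) :=
      (le_abs_self _).trans h
    have h35 : ((Nat.succ 3 : ℝ) / ((Nat.factorial 3 : ℝ) * 3)) = 4 / 18 := by
      norm_num [Nat.factorial]
    rw [h35] at h3
    have h4 : |t| ^ 3 ≤ |t| ^ 2 := pow_le_pow_of_le_one (abs_nonneg t) ht (by norm_num)
    have h5 : |t| ^ 2 = t ^ 2 := sq_abs t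
    nlinarith [sq_nonneg t]
  have h6 : p * Real.exp t + (1 - p) ≤ 1 + (p * t + 2 * t ^ 2) := by
    nlinarith [sq_nonneg t]
  exact h6.trans (by linarith [Real.add_one_le_exp (p * t + 2 * t ^ 2)])

lemma bern_tail {Ω' ι : Type*} [MeasurableSpace Ω'] (μ : Measure Ω') [IsProbabilityMeasure μ]
    (X : ι → Ω' → ℝ) (hXm : ∀ i, Measurable (X i))
    (hind : iIndepFun X μ)
    (p : ℝ) (hp0 : 0 ≤ p) (hp1 : p ≤ 1)
    (hB1 : ∀ i, μ {ω | X i ω = 1} = ENNReal.ofReal p)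
    (hB0 : ∀ i, μ {ω | X i ω = 0} = ENNReal.ofReal (1 - p))
    (F : Finset ι) (a t : ℝ) (ht0 : 0 ≤ t) (ht1 : t ≤ 1) :
    μ {ω | a ≤ |(∑ i ∈ F, X i ω) - (F.card : ℝ) * p|} ≤
      ENNReal.ofReal (2 * Real.exp (-(t * a) + 2 * (F.card : ℝ) * t ^ 2)) := by
  set m : ℝ := (F.card : ℝ) with hm
  have hm0 : 0 ≤ m := Nat.cast_nonneg _
  -- mgf bound for any |s| ≤ 1
  have hmgf : ∀ s : ℝ, |s| ≤ 1 →
      mgf (∑ i ∈ F, X i) μ s ≤ Real.exp (s * p * m + 2 * m * s ^ 2) := by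
    intro s hs
    rw [iIndepFun.mgf_sum hind hXm F]
    have heach : ∀ i ∈ F, mgf (X i) μ s = p * Real.exp s + (1 - p) := fun i _ =>
      (bern_mgf μ (X i) (hXm i) p hp0 hp1 (hB1 i) (hB0 i) s).1
    rw [Finset.prod_congr rfl heach, Finset.prod_const]
    calc (p * Real.exp s + (1 - p)) ^ F.card
        ≤ (Real.exp (p * s + 2 * s ^ 2)) ^ F.card := by
          apply pow_le_pow_left₀ _ (bern_mgf_bound hp0 hp1 hs)
          nlinarith [Real.exp_pos s]
      _ = Real.exp (m * (p * s + 2 * s ^ 2)) := by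
          rw [← Real.exp_nat_mul]
      _ ≤ Real.exp (s * p * m + 2 * m * s ^ 2) := by
          apply Real.exp_le_exp.mpr; ring_nf; exact le_refl _
  have hint : ∀ s : ℝ, Integrable (fun ω => Real.exp (s * (∑ i ∈ F, X i) ω)) μ := by
    intro s
    exact iIndepFun.integrable_exp_mul_sum hind hXm (fun i _ =>
      (bern_mgf μ (X i) (hXm i) p hp0 hp1 (hB1 i) (hB0 i) s).2)
  have habs_t : |t| ≤ 1 := abs_le.mpr ⟨by linarith, ht1⟩
  have habs_nt : |(-t)| ≤ 1 := by rwa [abs_neg]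
  -- upper tail
  have hup := measure_ge_le_exp_mul_mgf (μ := μ) (X := ∑ i ∈ F, X i) (t := t)
    (m * p + a) ht0 (hint t)
  have hup2 : (μ {ω | m * p + a ≤ (∑ i ∈ F, X i) ω}).toReal ≤
      Real.exp (-(t * a) + 2 * m * t ^ 2) := by
    refine hup.trans ?_
    calc Real.exp (-t * (m * p + a)) * mgf (∑ i ∈ F, X i) μ t
        ≤ Real.exp (-t * (m * p + a)) * Real.exp (t * p * m + 2 * m * t ^ 2) := by
          exact mul_le_mul_of_nonneg_left (hmgf t habs_t) (Real.exp_pos _).le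
      _ = Real.exp (-(t * a) + 2 * m * t ^ 2) := by
          rw [← Real.exp_add]; ring_nf
  -- lower tail
  have hlo := measure_le_le_exp_mul_mgf (μ := μ) (X := ∑ i ∈ F, X i) (t := -t)
    (m * p - a) (neg_nonpos.mpr ht0) (hint (-t))
  have hlo2 : (μ {ω | (∑ i ∈ F, X i) ω ≤ m * p - a}).toReal ≤
      Real.exp (-(t * a) + 2 * m * t ^ 2) := by
    refine hlo.trans ?_
    calc Real.exp (-(-t) * (m * p - a)) * mgf (∑ i ∈ F, X i) μ (-t)
        ≤ Real.exp (t * (m * p - a)) * Real.exp ((-t) * p * m + 2 * m * (-t) ^ 2) := by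
          rw [neg_neg]
          exact mul_le_mul_of_nonneg_left (hmgf (-t) habs_nt) (Real.exp_pos _).le
      _ = Real.exp (-(t * a) + 2 * m * t ^ 2) := by
          rw [← Real.exp_add]; ring_nf
  -- combine
  have hsub : {ω | a ≤ |(∑ i ∈ F, X i ω) - m * p|} ⊆
      {ω | m * p + a ≤ (∑ i ∈ F, X i) ω} ∪ {ω | (∑ i ∈ F, X i) ω ≤ m * p - a} := by
    intro ω hω
    simp only [Set.mem_setOf_eq] at hω
    rcases le_abs.mp hω with h | h
    · left; simp only [Set.mem_setOf_eq, Finset.sum_apply]; linarith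
    · right; simp only [Set.mem_setOf_eq, Finset.sum_apply]; linarith
  calc μ {ω | a ≤ |(∑ i ∈ F, X i ω) - m * p|}
      ≤ μ ({ω | m * p + a ≤ (∑ i ∈ F, X i) ω} ∪ {ω | (∑ i ∈ F, X i) ω ≤ m * p - a}) :=
        measure_mono hsub
    _ ≤ μ {ω | m * p + a ≤ (∑ i ∈ F, X i) ω} + μ {ω | (∑ i ∈ F, X i) ω ≤ m * p - a} :=
        measure_union_le _ _
    _ ≤ ENNReal.ofReal (Real.exp (-(t * a) + 2 * m * t ^ 2)) +
        ENNReal.ofReal (Real.exp (-(t * a) + 2 * m * t ^ 2)) := by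
        gcongr
        · rw [← ENNReal.ofReal_toReal (measure_ne_top μ _)]
          exact ENNReal.ofReal_le_ofReal hup2
        · rw [← ENNReal.ofReal_toReal (measure_ne_top μ _)]
          exact ENNReal.ofReal_le_ofReal hlo2
    _ = ENNReal.ofReal (2 * Real.exp (-(t * a) + 2 * m * t ^ 2)) := by
        rw [← ENNReal.ofReal_add (Real.exp_pos _).le (Real.exp_pos _).le]
        ring_nf

end ErdosRenyiAux

lemma sum_edges {n : ℕ} (C D : Finset (Fin n)) (hCD : Disjoint C D) :
    ∃ F : Finset {x : Fin n × Fin n // x.1 < x.2},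
      F.card = C.card * D.card ∧
      ∀ (g : Fin n → Fin n → ℝ), (∀ i j, g i j = g j i) →
        ∑ i ∈ C, ∑ j ∈ D, g i j = ∑ e ∈ F, g e.1.1 e.1.2 := by
  classical
  have hne : ∀ x : Fin n × Fin n, x ∈ C ×ˢ D → x.1 ≠ x.2 := by
    intro x hx h
    rw [Finset.mem_product] at hx
    exact Finset.disjoint_left.mp hCD hx.1 (h ▸ hx.2)
  let ed : {x : Fin n × Fin n // x ∈ C ×ˢ D} → {x : Fin n × Fin n // x.1 < x.2} :=
    fun x => if h : x.1.1 < x.1.2 then ⟨x.1, h⟩ else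
      ⟨(x.1.2, x.1.1), lt_of_le_of_ne (not_lt.mp h) ((hne x.1 x.2).symm)⟩
  have hinj : Function.Injective ed := by
    rintro ⟨x, hx⟩ ⟨y, hy⟩ hxy
    have hx' := Finset.mem_product.mp hx
    have hy' := Finset.mem_product.mp hy
    simp only [ed] at hxy
    split_ifs at hxy with h1 h2 h2 <;>
      rw [Subtype.mk.injEq] at hxy
    · exact Subtype.ext hxy
    · exfalso
      have : x.1 = y.2 := congrArg Prod.fst hxy
      exact Finset.disjoint_left.mp hCD hx'.1 (this ▸ hy'.2)
    · exfalso
      have : x.2 = y.1 := congrArg Prod.fst hxy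
      exact Finset.disjoint_left.mp hCD hy'.1 (this ▸ hx'.2)
    · apply Subtype.ext
      have e1 : x.2 = y.2 := congrArg Prod.fst hxy
      have e2 : x.1 = y.1 := congrArg Prod.snd hxy
      exact Prod.ext e2 e1
  refine ⟨(C ×ˢ D).attach.image ed, ?_, ?_⟩
  · rw [Finset.card_image_of_injective _ hinj, Finset.card_attach, Finset.card_product]
  · intro g hg
    rw [← Finset.sum_product', ← Finset.sum_attach (C ×ˢ D) (fun x => g x.1 x.2),
      Finset.sum_image (fun x _ y _ h => hinj h)]
    apply Finset.sum_congr rfl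
    intro x _
    by_cases h : x.1.1 < x.1.2
    · simp only [ed, dif_pos h]
    · simp only [ed, dif_neg h]
      exact hg _ _

theorem erdos_renyi_edge_count_lln
    (p c d : ℝ) (hp : p ∈ Set.Ioo (0 : ℝ) 1) (hc : 0 < c) (hd : 0 < d)
    (hcd : c + d ≤ 1)
    (Ω : ℕ → Type) [∀ n, MeasurableSpace (Ω n)]
    (P : ∀ n, Measure (Ω n)) [∀ n, IsProbabilityMeasure (P n)]
    (U : ∀ n, Fin n → Fin n → Ω n → ℝ)
    (hsymm : ∀ n (i j : Fin n), U n i j = U n j i)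
    (hmeas : ∀ n (i j : Fin n), Measurable (U n i j))
    (hBern1 : ∀ n, ∀ i j : Fin n, i < j →
      P n {ω | U n i j ω = 1} = ENNReal.ofReal p)
    (hBern0 : ∀ n, ∀ i j : Fin n, i < j →
      P n {ω | U n i j ω = 0} = ENNReal.ofReal (1 - p))
    (hindep : ∀ n, iIndepFun
      (fun (e : {x : Fin n × Fin n // x.1 < x.2}) => U n e.1.1 e.1.2) (P n)) :
    ∀ ε > (0 : ℝ),
      Tendsto (fun n => P n {ω | ∃ C D : Finset (Fin n), Disjoint C D ∧
          c * n ≤ (C.card : ℝ) ∧ d * n ≤ (D.card : ℝ) ∧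
          ε * (n : ℝ) ^ 2 ≤
            |(∑ i ∈ C, ∑ j ∈ D, U n i j ω)
              - (C.card : ℝ) * (D.card : ℝ) * p|})
        atTop (nhds 0) := by
  classical
  obtain ⟨hp0, hp1⟩ := hp
  intro ε hε
  set t : ℝ := min 1 (ε / 8) with hT
  have ht0 : 0 < t := lt_min one_pos (by positivity)
  have ht1 : t ≤ 1 := min_le_left _ _
  have htε : t ≤ ε / 8 := min_le_right _ _
  set κ : ℝ := t * ε - 2 * t ^ 2 with hκ
  have hκ0 : 0 < κ := by nlinarith
  -- per-n bound
  have key : ∀ n : ℕ, P n {ω | ∃ C D : Finset (Fin n), Disjoint C D ∧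
      c * n ≤ (C.card : ℝ) ∧ d * n ≤ (D.card : ℝ) ∧
      ε * (n : ℝ) ^ 2 ≤
        |(∑ i ∈ C, ∑ j ∈ D, U n i j ω) - (C.card : ℝ) * (D.card : ℝ) * p|} ≤
      ENNReal.ofReal ((4 : ℝ) ^ n * (2 * Real.exp (-(κ * (n : ℝ) ^ 2)))) := by
    intro n
    set Eset : Finset (Fin n) × Finset (Fin n) → Set (Ω n) := fun q =>
      {ω | Disjoint q.1 q.2 ∧ ε * (n : ℝ) ^ 2 ≤
        |(∑ i ∈ q.1, ∑ j ∈ q.2, U n i j ω) - (q.1.card : ℝ) * (q.2.card : ℝ) * p|}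
      with hEset
    have hterm : ∀ q : Finset (Fin n) × Finset (Fin n),
        P n (Eset q) ≤ ENNReal.ofReal (2 * Real.exp (-(κ * (n : ℝ) ^ 2))) := by
      intro q
      by_cases hq : Disjoint q.1 q.2
      · obtain ⟨F, hFcard, hFsum⟩ := sum_edges q.1 q.2 hq
        have hFle : (F.card : ℝ) ≤ (n : ℝ) ^ 2 := by
          have h1 : q.1.card ≤ n := by
            simpa using Finset.card_le_univ q.1
          have h2 : q.2.card ≤ n := by
            simpa using Finset.card_le_univ q.2
          have : F.card ≤ n ^ 2 := by
            rw [hFcard, pow_two]; exact Nat.mul_le_mul h1 h2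
          exact_mod_cast this
        have hsub : Eset q ⊆
            {ω | ε * (n : ℝ) ^ 2 ≤
              |(∑ e ∈ F, U n e.1.1 e.1.2 ω) - (F.card : ℝ) * p|} := by
          rintro ω ⟨-, hω⟩
          have hrw := hFsum (fun i j => U n i j ω) (fun i j => congrFun (hsymm n i j) ω)
          simp only [Set.mem_setOf_eq]
          rw [← hrw, hFcard]
          push_cast
          exact hω
        have htail := bern_tail (P n)
          (fun (e : {x : Fin n × Fin n // x.1 < x.2}) => U n e.1.1 e.1.2)
          (fun e => hmeas n e.1.1 e.1.2) (hindep n) p hp0.le hp1.le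
          (fun e => hBern1 n e.1.1 e.1.2 e.2) (fun e => hBern0 n e.1.1 e.1.2 e.2)
          F (ε * (n : ℝ) ^ 2) t ht0.le ht1
        refine ((measure_mono hsub).trans htail).trans (ENNReal.ofReal_le_ofReal ?_)
        have hexp : -(t * (ε * (n : ℝ) ^ 2)) + 2 * (F.card : ℝ) * t ^ 2 ≤
            -(κ * (n : ℝ) ^ 2) := by
          have hn2 : (0 : ℝ) ≤ (n : ℝ) ^ 2 := by positivity
          have := mul_le_mul_of_nonneg_right hFle (by positivity : (0:ℝ) ≤ 2 * t ^ 2)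
          nlinarith
        have := Real.exp_le_exp.mpr hexp
        linarith
      · have : Eset q = ∅ := by
          ext ω; simp [hEset, hq]
        rw [this, measure_empty]
        exact zero_le
    calc P n {ω | ∃ C D : Finset (Fin n), Disjoint C D ∧
          c * n ≤ (C.card : ℝ) ∧ d * n ≤ (D.card : ℝ) ∧
          ε * (n : ℝ) ^ 2 ≤
            |(∑ i ∈ C, ∑ j ∈ D, U n i j ω) - (C.card : ℝ) * (D.card : ℝ) * p|}
        ≤ P n (⋃ q ∈ (Finset.univ : Finset (Finset (Fin n) × Finset (Fin n))), Eset q) := by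
          apply measure_mono
          rintro ω ⟨C, D, h1, -, -, h4⟩
          exact Set.mem_iUnion₂.mpr ⟨(C, D), Finset.mem_univ _, ⟨h1, h4⟩⟩
      _ ≤ ∑ q ∈ (Finset.univ : Finset (Finset (Fin n) × Finset (Fin n))), P n (Eset q) :=
          measure_biUnion_finset_le _ _
      _ ≤ ∑ _q ∈ (Finset.univ : Finset (Finset (Fin n) × Finset (Fin n))),
            ENNReal.ofReal (2 * Real.exp (-(κ * (n : ℝ) ^ 2))) :=
          Finset.sum_le_sum (fun q _ => hterm q)
      _ = ENNReal.ofReal ((4 : ℝ) ^ n * (2 * Real.exp (-(κ * (n : ℝ) ^ 2)))) := by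
          rw [Finset.sum_const, Finset.card_univ, nsmul_eq_mul]
          have hcard : (Fintype.card (Finset (Fin n) × Finset (Fin n)) : ENNReal) =
              ENNReal.ofReal ((4 : ℝ) ^ n) := by
            rw [Fintype.card_prod, Fintype.card_finset, Fintype.card_fin]
            have : ((2 ^ n * 2 ^ n : ℕ) : ℝ) = (4 : ℝ) ^ n := by
              push_cast
              rw [← mul_pow]; norm_num
            rw [← this, ENNReal.ofReal_natCast]
          rw [hcard, ← ENNReal.ofReal_mul (by positivity)]
    -- end per-n bound
  have hto : Tendsto (fun n : ℕ =>
      ENNReal.ofReal ((4 : ℝ) ^ n * (2 * Real.exp (-(κ * (n : ℝ) ^ 2))))) atTop (nhds 0) := by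
    rw [← ENNReal.ofReal_zero]
    apply ENNReal.tendsto_ofReal
    have heq : ∀ n : ℕ, (4 : ℝ) ^ n * (2 * Real.exp (-(κ * (n : ℝ) ^ 2))) =
        2 * Real.exp ((n : ℝ) * (Real.log 4 - κ * (n : ℝ))) := by
      intro n
      have h4 : (4 : ℝ) ^ n = Real.exp ((n : ℝ) * Real.log 4) := by
        rw [Real.exp_nat_mul, Real.exp_log (by norm_num)]
      rw [h4, mul_left_comm, ← Real.exp_add]
      congr 2
      ring
    simp only [heq]
    have hlin : Tendsto (fun n : ℕ => (n : ℝ) * (Real.log 4 - κ * (n : ℝ))) atTop atBot := by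
      apply Filter.Tendsto.atTop_mul_atBot₀ (tendsto_natCast_atTop_atTop (R := ℝ))
      have h1 : Tendsto (fun n : ℕ => κ * (n : ℝ) - Real.log 4) atTop atTop :=
        tendsto_atTop_add_const_right _ _ ((tendsto_natCast_atTop_atTop (R := ℝ)).const_mul_atTop hκ0)
      have h2 : (fun n : ℕ => Real.log 4 - κ * (n : ℝ)) =
          fun n : ℕ => -(κ * (n : ℝ) - Real.log 4) := by
        funext n; ring
      rw [h2]
      exact tendsto_neg_atTop_atBot.comp h1
    have := (Real.tendsto_exp_atBot.comp hlin).const_mul (2 : ℝ)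
    simpa using this
  exact tendsto_of_tendsto_of_tendsto_of_le_of_le tendsto_const_nhds hto
    (fun n => zero_le) key
end

section
/- Let K ≥ 1, q₁,…,q_K ∈ [0,M₁], μ₁,…,μ_K > 0 with Σ_{j=1}^K μ_j = 1, θ ∈ (0,1), p ∈ (0,1), λ > 0. Suppose (s(·,1),…,s(·,K), v) : [0,S] → ℝ^{K+1} is differentiable, satisfies s'(u,i) = −pλ v(u) q_i s(u,i) for 1 ≤ i ≤ K and v'(u) = −v(u) + pλ v(u) Σ_{i=1}^K q_i² s(u,i), with s(0,i) = (1−θ)μ_i and v(0) = θ Σ_{i=1}^K q_i μ_i, and that v(u) > 0 for all u ∈ [0,S]. Suppose A : [0,T] → [0,S] is differentiable with A(0) = 0 and A'(t) = 1/v(A(t)) for all t ∈ [0,T]. Then for every t ∈ [0,T] and 1 ≤ i ≤ K: s(A(t), i) = (1−θ) μ_i e^{−pλ q_i t} and v(A(t)) = Σ_{j=1}^K μ_j q_j − t − (1−θ) Σ_{j=1}^K μ_j q_j e^{−pλ q_j t}. -/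
/- Equation (3.30) of the paper: explicit solution of the time-changed limit
ODE. If `(s, v)` solves the limit system on `[0,S]` with `v > 0` there, and
`A` solves `A' = 1/v(A)`, `A(0) = 0` on `[0,T]`, then
`s(A(t), i) = (1-θ) μ_i e^{-pλ q_i t}` and
`v(A(t)) = Σ μ_j q_j - t - (1-θ) Σ μ_j q_j e^{-pλ q_j t}`. -/
theorem time_changed_system_explicit_solution
    (K : ℕ) (hK : 1 ≤ K) (M₁ : ℝ)
    (q μ : Fin K → ℝ) (hq : ∀ j, q j ∈ Set.Icc (0 : ℝ) M₁)
    (hμ : ∀ j, 0 < μ j) (hμsum : ∑ j, μ j = 1)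
    (θ p lam : ℝ) (hθ : θ ∈ Set.Ioo (0 : ℝ) 1) (hp : p ∈ Set.Ioo (0 : ℝ) 1)
    (hlam : 0 < lam)
    (S T : ℝ) (hS : 0 ≤ S) (hT : 0 ≤ T)
    (s : ℝ → Fin K → ℝ) (v : ℝ → ℝ)
    (hs' : ∀ u ∈ Set.Icc 0 S, ∀ i,
      HasDerivAt (fun w => s w i) (-(p * lam) * v u * q i * s u i) u)
    (hv' : ∀ u ∈ Set.Icc 0 S,
      HasDerivAt v (-v u + p * lam * v u * ∑ i, (q i) ^ 2 * s u i) u)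
    (hs0 : ∀ i, s 0 i = (1 - θ) * μ i)
    (hv0 : v 0 = θ * ∑ i, q i * μ i)
    (hvpos : ∀ u ∈ Set.Icc 0 S, 0 < v u)
    (A : ℝ → ℝ)
    (hAmem : ∀ t ∈ Set.Icc 0 T, A t ∈ Set.Icc 0 S)
    (hA0 : A 0 = 0)
    (hA' : ∀ t ∈ Set.Icc 0 T, HasDerivAt A (1 / v (A t)) t) :
    ∀ t ∈ Set.Icc 0 T,
      (∀ i, s (A t) i = (1 - θ) * μ i * Real.exp (-(p * lam) * q i * t)) ∧
      v (A t) = (∑ j, μ j * q j) - t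
        - (1 - θ) * ∑ j, μ j * q j * Real.exp (-(p * lam) * q j * t) := by
  -- derivative of s ∘ A
  have hvne : ∀ t ∈ Set.Icc (0:ℝ) T, v (A t) ≠ 0 := fun t ht =>
    (hvpos _ (hAmem t ht)).ne'
  have hsA : ∀ t ∈ Set.Icc (0:ℝ) T, ∀ i,
      HasDerivAt (fun t => s (A t) i) (-(p * lam) * q i * s (A t) i) t := by
    intro t ht i
    have h := ((hs' (A t) (hAmem t ht) i).comp t (hA' t ht))
    refine h.congr_deriv ?_
    field_simp [hvne t ht]
  -- first part: s(A t, i) explicit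
  have hspart : ∀ t ∈ Set.Icc (0:ℝ) T, ∀ i,
      s (A t) i = (1 - θ) * μ i * Real.exp (-(p * lam) * q i * t) := by
    intro t ht i
    set G : ℝ → ℝ := fun t => s (A t) i * Real.exp ((p * lam) * q i * t) with hG
    have hGderiv : ∀ t ∈ Set.Icc (0:ℝ) T, HasDerivAt G 0 t := by
      intro t ht
      have hexp : HasDerivAt (fun t => Real.exp ((p * lam) * q i * t))
          (Real.exp ((p * lam) * q i * t) * ((p * lam) * q i * 1)) t :=
        ((hasDerivAt_id t).const_mul ((p * lam) * q i)).exp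
      have := (hsA t ht i).mul hexp
      refine this.congr_deriv ?_
      ring
    have hcont : ContinuousOn G (Set.Icc 0 T) := fun x hx =>
      (hGderiv x hx).continuousAt.continuousWithinAt
    have hconst := constant_of_has_deriv_right_zero hcont
      (fun x hx => ((hGderiv x (Set.Ico_subset_Icc_self hx)).hasDerivWithinAt)) t ht
    have hG0 : G 0 = (1 - θ) * μ i := by
      simp [hG, hA0, hs0 i]
    rw [hG0] at hconst
    have hE : Real.exp ((p * lam) * q i * t) ≠ 0 := Real.exp_ne_zero _
    rw [show (-(p * lam) * q i * t) = -((p * lam) * q i * t) by ring, Real.exp_neg,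
      ← hconst]
    simp only [hG]
    field_simp
  intro t ht
  refine ⟨hspart t ht, ?_⟩
  -- second part
  set H : ℝ → ℝ := fun t => v (A t) + t
      + (1 - θ) * ∑ j, μ j * q j * Real.exp (-(p * lam) * q j * t) with hH
  have hHderiv : ∀ t ∈ Set.Icc (0:ℝ) T, HasDerivAt H 0 t := by
    intro t ht
    have hDv : HasDerivAt (fun t => v (A t))
        (-1 + p * lam * ∑ i, (q i) ^ 2 * s (A t) i) t := by
      have h := (hv' (A t) (hAmem t ht)).comp t (hA' t ht)
      refine h.congr_deriv ?_
      field_simp [hvne t ht]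
    have hDsum : HasDerivAt (fun t => ∑ j, μ j * q j * Real.exp (-(p * lam) * q j * t))
        (∑ j, μ j * q j * (Real.exp (-(p * lam) * q j * t) * (-(p * lam) * q j * 1))) t := by
      apply HasDerivAt.fun_sum
      intro j _
      exact (((hasDerivAt_id t).const_mul (-(p * lam) * q j)).exp).const_mul (μ j * q j)
    have h := (hDv.add (hasDerivAt_id t)).add (hDsum.const_mul (1 - θ))
    refine h.congr_deriv ?_
    have hs1 := hspart t ht
    have : (p * lam * ∑ i, (q i) ^ 2 * s (A t) i)
        + (1 - θ) * ∑ j, μ j * q j * (Real.exp (-(p * lam) * q j * t) * (-(p * lam) * q j * 1)) = 0 := by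
      simp only [hs1]
      rw [Finset.mul_sum, Finset.mul_sum, ← Finset.sum_add_distrib]
      apply Finset.sum_eq_zero
      intro j _
      ring
    linarith [this]
  have hcont : ContinuousOn H (Set.Icc 0 T) := fun x hx =>
    (hHderiv x hx).continuousAt.continuousWithinAt
  have hconst := constant_of_has_deriv_right_zero hcont
    (fun x hx => ((hHderiv x (Set.Ico_subset_Icc_self hx)).hasDerivWithinAt)) t ht
  have hH0 : H 0 = ∑ j, μ j * q j := by
    simp only [hH, hA0, hv0, mul_zero, Real.exp_zero, mul_one, add_zero]
    have h1 : ∑ i, q i * μ i = ∑ j, μ j * q j :=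
      Finset.sum_congr rfl fun j _ => mul_comm _ _
    rw [h1]
    ring
  rw [hH0] at hconst
  simp only [hH] at hconst
  linarith [hconst]
end

section
/- Let K ≥ 1, q₁,…,q_K ∈ [0,M₁], μ₁,…,μ_K > 0 with Σ_{j=1}^K μ_j = 1, θ ∈ (0,1), p ∈ (0,1), λ > 0, and set H_V(x) = Σ_{j=1}^K μ_j q_j − (1−θ)Σ_{j=1}^K μ_j q_j x^{q_j} + (log x)/(pλ) for x > 0. Suppose ψ : [0,T] → (0,∞) is differentiable with ψ(0) = 1 and ψ'(t) = −pλ ψ(t) H_V(ψ(t)) for all t ∈ [0,T]. Define s(t,i) = (1−θ) μ_i ψ(t)^{q_i} for 1 ≤ i ≤ K and v(t) = H_V(ψ(t)). Then s(0,i) = (1−θ)μ_i, v(0) = θ Σ_{i=1}^K q_i μ_i, and for all t ∈ [0,T]: s'(t,i) = −pλ v(t) q_i s(t,i) for each 1 ≤ i ≤ K, and v'(t) = −v(t) + pλ v(t) Σ_{i=1}^K q_i² s(t,i). -/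
/- Equation (3.28) of the paper (verification step): if ψ solves ODE (2.3),
`ψ' = -pλ ψ H_V(ψ)`, `ψ(0) = 1`, then `s(t,i) := (1-θ) μ_i ψ(t)^{q_i}` and
`v(t) := H_V(ψ(t))` solve the limit system ODE (3.7) with initial data
`s(0,i) = (1-θ)μ_i`, `v(0) = θ Σ q_i μ_i`. -/
theorem psi_solution_solves_limit_system
    (K : ℕ) (hK : 1 ≤ K) (M₁ : ℝ)
    (q μ : Fin K → ℝ) (hq : ∀ j, q j ∈ Set.Icc (0 : ℝ) M₁)
    (hμ : ∀ j, 0 < μ j) (hμsum : ∑ j, μ j = 1)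
    (θ p lam : ℝ) (hθ : θ ∈ Set.Ioo (0 : ℝ) 1) (hp : p ∈ Set.Ioo (0 : ℝ) 1)
    (hlam : 0 < lam)
    (HV : ℝ → ℝ)
    (hHV : ∀ x > (0 : ℝ), HV x =
      (∑ j, μ j * q j) - (1 - θ) * (∑ j, μ j * q j * x ^ (q j))
        + Real.log x / (p * lam))
    (T : ℝ) (hT : 0 ≤ T)
    (ψ : ℝ → ℝ) (hψpos : ∀ t ∈ Set.Icc 0 T, 0 < ψ t) (hψ0 : ψ 0 = 1)
    (hψ' : ∀ t ∈ Set.Icc 0 T,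
      HasDerivAt ψ (-(p * lam) * ψ t * HV (ψ t)) t)
    (s : ℝ → Fin K → ℝ) (v : ℝ → ℝ)
    (hs : ∀ t i, s t i = (1 - θ) * μ i * ψ t ^ (q i))
    (hv : ∀ t, v t = HV (ψ t)) :
    (∀ i, s 0 i = (1 - θ) * μ i) ∧
    v 0 = θ * ∑ i, q i * μ i ∧
    (∀ t ∈ Set.Icc 0 T, ∀ i,
      HasDerivAt (fun u => s u i) (-(p * lam) * v t * q i * s t i) t) ∧
    (∀ t ∈ Set.Icc 0 T,
      HasDerivAt v (-v t + p * lam * v t * ∑ i, (q i) ^ 2 * s t i) t) := by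
  have hpl : 0 < p * lam := mul_pos hp.1 hlam
  refine ⟨?_, ?_, ?_, ?_⟩
  · intro i
    rw [hs, hψ0, Real.one_rpow, mul_one]
  · rw [hv, hψ0, hHV 1 one_pos]
    simp only [Real.one_rpow, mul_one, Real.log_one, zero_div, add_zero]
    have : ∑ i, q i * μ i = ∑ i, μ i * q i := Finset.sum_congr rfl fun i _ => mul_comm _ _
    rw [this]; ring
  · intro t ht i
    have hψt := hψpos t ht
    have hd := hψ' t ht
    have h1 : HasDerivAt (fun u => ψ u ^ (q i))
        ((-(p * lam) * ψ t * HV (ψ t)) * q i * ψ t ^ (q i - 1)) t :=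
      hd.rpow_const (Or.inl hψt.ne')
    have h2 := h1.const_mul ((1 - θ) * μ i)
    have heq : (fun u => s u i) = fun u => (1 - θ) * μ i * ψ u ^ (q i) := by
      funext u; exact hs u i
    rw [heq]
    refine h2.congr_deriv ?_
    have hrw : ψ t ^ (q i - 1) * ψ t = ψ t ^ (q i) := by
      rw [← Real.rpow_add_one hψt.ne' (q i - 1)]; ring_nf
    rw [hv, hs, ← hrw]; ring
  · intro t ht
    have hψt := hψpos t ht
    have hd := hψ' t ht
    have hg1 : HasDerivAt (fun x : ℝ => ∑ j, μ j * q j * x ^ (q j))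
        (∑ j, μ j * q j * (q j * ψ t ^ (q j - 1))) (ψ t) :=
      HasDerivAt.fun_sum fun j _ =>
        (Real.hasDerivAt_rpow_const (Or.inl hψt.ne')).const_mul (μ j * q j)
    have hg2 : HasDerivAt (fun x : ℝ => Real.log x / (p * lam))
        ((ψ t)⁻¹ / (p * lam)) (ψ t) := (Real.hasDerivAt_log hψt.ne').div_const _
    have hg : HasDerivAt
        (fun x : ℝ => (∑ j, μ j * q j) - (1 - θ) * (∑ j, μ j * q j * x ^ (q j))
          + Real.log x / (p * lam))
        (0 - (1 - θ) * (∑ j, μ j * q j * (q j * ψ t ^ (q j - 1)))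
          + (ψ t)⁻¹ / (p * lam)) (ψ t) :=
      ((hasDerivAt_const _ _).sub (hg1.const_mul (1 - θ))).add hg2
    have hcomp := hg.comp t hd
    have hpos : ∀ᶠ u in nhds t, 0 < ψ u :=
      hd.continuousAt.preimage_mem_nhds (Ioi_mem_nhds hψt)
    have hev : v =ᶠ[nhds t]
        (fun x : ℝ => (∑ j, μ j * q j) - (1 - θ) * (∑ j, μ j * q j * x ^ (q j))
          + Real.log x / (p * lam)) ∘ ψ := by
      filter_upwards [hpos] with u hu
      simp only [Function.comp_apply, hv u, hHV (ψ u) hu]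
    have hfinal := hcomp.congr_of_eventuallyEq hev
    refine hfinal.congr_deriv ?_
    have hrw : ∀ j, ψ t ^ (q j - 1) * ψ t = ψ t ^ (q j) := fun j => by
      rw [← Real.rpow_add_one hψt.ne' (q j - 1)]; ring_nf
    simp only [hv, hs]
    have hsum' : (∑ j, μ j * q j * (q j * ψ t ^ (q j - 1))) * ψ t
        = ∑ j, q j ^ 2 * (μ j * ψ t ^ (q j)) := by
      rw [Finset.sum_mul]
      exact Finset.sum_congr rfl fun j _ => by rw [← hrw j]; ring
    have hsum2 : ∑ i, q i ^ 2 * ((1 - θ) * μ i * ψ t ^ (q i))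
        = (1 - θ) * ∑ j, q j ^ 2 * (μ j * ψ t ^ (q j)) := by
      rw [Finset.mul_sum]
      exact Finset.sum_congr rfl fun j _ => by ring
    rw [hsum2, ← hsum']
    field_simp [hp.1.ne', hlam.ne']
    ring
end
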